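/- If f : [0,1] → ℝ is convex, then for every n > 1 and x ∈ [0,1], R_n(f;x) ≥ f(x), where R_n is the Pólya–Bernstein-type operator with parameters a = x, b = 1−x, c = −min{x,1−x}/(n−1). -/

import Mathlib

/-- Generalized rising factorial with increment `h`: `x^(m,h) = x(x+h)···(x+(m-1)h)`. -/
noncomputable def rfac (x h : ℝ) (m : ℕ) : ℝ := ∏ i ∈ Finset.range m, (x + i * h)

/-- Pólya urn probability `p_{n,k}^{a,b,c}`. -/
noncomputable def polyaProb (a b c : ℝ) (n k : ℕ) : ℝ :=
  (n.choose k : ℝ) * rfac a c k * rfac b c (n - k) / rfac (a + b) c n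

/-- The operator `R_n(f;x)` with `c = -min{x,1-x}/(n-1)`. -/
noncomputable def Rop (n : ℕ) (f : ℝ → ℝ) (x : ℝ) : ℝ :=
  ∑ k ∈ Finset.range (n + 1),
    polyaProb x (1 - x) (-(min x (1 - x)) / ((n : ℝ) - 1)) n k * f ((k : ℝ) / n)

/-- Modulus of continuity of `f` on `[a,b]`. -/
noncomputable def modulus (f : ℝ → ℝ) (a b δ : ℝ) : ℝ :=
  sSup {d : ℝ | ∃ u ∈ Set.Icc a b, ∃ v ∈ Set.Icc a b, |u - v| ≤ δ ∧ d = |f u - f v|}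

lemma rfac_succ_left (x h : ℝ) (m : ℕ) :
    rfac x h (m+1) = x * rfac (x+h) h m := by
  rw [rfac, Finset.prod_range_succ', rfac, mul_comm]
  congr 1
  · norm_num
  · apply Finset.prod_congr rfl; intro i _; push_cast; ring

lemma rfac_vandermonde (c : ℝ) : ∀ (n : ℕ) (a b : ℝ),
    ∑ k ∈ Finset.range (n+1), (n.choose k : ℝ) * rfac a c k * rfac b c (n-k)
      = rfac (a+b) c n := by
  intro n
  induction n with
  | zero => intro a b; simp [rfac]
  | succ n ih =>
    intro a b
    rw [Finset.sum_range_succ' ]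
    have h1 : ∀ j ∈ Finset.range (n+1),
        ((n+1).choose (j+1) : ℝ) * rfac a c (j+1) * rfac b c (n+1-(j+1))
        = (n.choose j : ℝ) * (a * rfac (a+c) c j) * rfac b c (n-j)
          + (n.choose (j+1) : ℝ) * rfac a c (j+1) * rfac b c (n-j) := by
      intro j hj
      rw [Nat.choose_succ_succ, rfac_succ_left]
      push_cast
      ring
    rw [Finset.sum_congr rfl h1, Finset.sum_add_distrib]
    have e1 : ∑ j ∈ Finset.range (n+1), (n.choose j : ℝ) * (a * rfac (a+c) c j) * rfac b c (n-j)
        = a * rfac (a+b+c) c n := by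
      rw [show a+b+c = a+c+b by ring, ← ih (a+c) b, Finset.mul_sum]
      apply Finset.sum_congr rfl; intro j _; ring
    have e2 : (∑ j ∈ Finset.range (n+1), (n.choose (j+1) : ℝ) * rfac a c (j+1) * rfac b c (n-j))
        + ((n+1).choose 0 : ℝ) * rfac a c 0 * rfac b c (n+1-0)
        = b * rfac (a+b+c) c n := by
      rw [show a+b+c = a+(b+c) by ring, ← ih a (b+c)]
      rw [Finset.mul_sum]
      rw [show (∑ k ∈ Finset.range (n+1), b * ((n.choose k : ℝ) * rfac a c k * rfac (b+c) c (n-k)))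
          = ∑ k ∈ Finset.range (n+1), (n.choose k : ℝ) * rfac a c k * rfac b c (n+1-k) from
        Finset.sum_congr rfl (by
          intro k hk
          have hk' : k ≤ n := Nat.lt_succ_iff.mp (Finset.mem_range.mp hk)
          rw [show n+1-k = (n-k)+1 by omega, rfac_succ_left]
          ring)]
      rw [Finset.sum_range_succ' (fun k => (n.choose k : ℝ) * rfac a c k * rfac b c (n+1-k)) n]
      rw [Finset.sum_range_succ]
      simp
    rw [add_assoc, e1, e2, rfac_succ_left]
    ring

lemma rfac_moment (c : ℝ) (n : ℕ) (a b : ℝ) :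
    ∑ k ∈ Finset.range (n+1+1), (k : ℝ) * ((n+1).choose k : ℝ) * rfac a c k * rfac b c (n+1-k)
      = (n+1) * a * rfac (a+b+c) c n := by
  rw [Finset.sum_range_succ']
  push_cast
  have h1 : ∀ j ∈ Finset.range (n+1),
      ((j:ℝ)+1) * ((n+1).choose (j+1) : ℝ) * rfac a c (j+1) * rfac b c (n-j)
      = ((n:ℝ)+1) * a * ((n.choose j : ℝ) * rfac (a+c) c j * rfac b c (n-j)) := by
    intro j hj
    have hch : ((j:ℝ)+1) * ((n+1).choose (j+1) : ℝ) = ((n:ℝ)+1) * (n.choose j : ℝ) := by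
      have h := Nat.add_one_mul_choose_eq n j
      have h2 := congrArg (Nat.cast : ℕ → ℝ) h
      push_cast at h2
      linarith
    rw [rfac_succ_left]
    calc ((j:ℝ)+1) * ((n+1).choose (j+1) : ℝ) * (a * rfac (a+c) c j) * rfac b c (n-j)
        = (((j:ℝ)+1) * ((n+1).choose (j+1) : ℝ)) * a * rfac (a+c) c j * rfac b c (n-j) := by ring
      _ = ((n:ℝ)+1) * a * ((n.choose j : ℝ) * rfac (a+c) c j * rfac b c (n-j)) := by
          rw [hch]; ring
  rw [Finset.sum_congr rfl h1, ← Finset.mul_sum]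
  rw [show a+b+c = a+c+b by ring, ← rfac_vandermonde c n (a+c) b]
  norm_num

theorem Rop_ge_of_convex (f : ℝ → ℝ) (hf : ConvexOn ℝ (Set.Icc (0 : ℝ) 1) f)
    (n : ℕ) (hn : 1 < n) (x : ℝ) (hx : x ∈ Set.Icc (0 : ℝ) 1) :
    f x ≤ Rop n f x := by
  obtain ⟨hx0, hx1⟩ := hx
  set c : ℝ := -(min x (1 - x)) / ((n : ℝ) - 1) with hc
  set mm : ℝ := min x (1 - x) with hmm
  have hn1 : (0:ℝ) < (n:ℝ) - 1 := by
    have : (2:ℝ) ≤ n := by exact_mod_cast hn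
    linarith
  have hmm0 : 0 ≤ mm := le_min hx0 (by linarith)
  have hmmhalf : mm ≤ 1/2 := by
    rcases le_total x (1/2) with h | h
    · exact le_trans (min_le_left _ _) h
    · exact le_trans (min_le_right _ _) (by linarith)
  have hic : ∀ i : ℕ, (i:ℝ) ≤ (n:ℝ) - 1 → -mm ≤ (i:ℝ) * c := by
    intro i hi
    have hceq : c * ((n:ℝ) - 1) = -mm := by
      rw [hc]; field_simp
    have hc0 : c ≤ 0 := by
      rw [hc]
      apply div_nonpos_of_nonpos_of_nonneg <;> linarith
    nlinarith [mul_nonneg (sub_nonneg.mpr hi) (neg_nonneg.mpr hc0)]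
  have hicast : ∀ i : ℕ, i < n → (i:ℝ) ≤ (n:ℝ) - 1 := by
    intro i hi
    have : ((i:ℝ)) + 1 ≤ (n:ℝ) := by exact_mod_cast hi
    linarith
  -- nonnegativity of rising factorials
  have hrf_nonneg : ∀ (y : ℝ), mm ≤ y → ∀ k, k ≤ n → 0 ≤ rfac y c k := by
    intro y hy k hk
    apply Finset.prod_nonneg
    intro i hi
    have hi' : i < n := lt_of_lt_of_le (Finset.mem_range.mp hi) hk
    have := hic i (hicast i hi')
    linarith
  have hrf_pos : 0 < rfac 1 c n := by
    apply Finset.prod_pos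
    intro i hi
    have := hic i (hicast i (Finset.mem_range.mp hi))
    linarith
  -- weights
  set w : ℕ → ℝ := fun k => polyaProb x (1 - x) c n k with hw
  have hden : rfac (x + (1 - x)) c n = rfac 1 c n := by norm_num
  have hw_nonneg : ∀ k ∈ Finset.range (n+1), 0 ≤ w k := by
    intro k hk
    have hk' : k ≤ n := Nat.lt_succ_iff.mp (Finset.mem_range.mp hk)
    rw [hw]
    simp only [polyaProb, hden]
    apply div_nonneg _ (le_of_lt hrf_pos)
    apply mul_nonneg (mul_nonneg (by positivity) (hrf_nonneg x (min_le_left _ _) k hk'))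
    exact hrf_nonneg (1-x) (min_le_right _ _) (n-k) (Nat.sub_le _ _)
  have hw_sum : ∑ k ∈ Finset.range (n+1), w k = 1 := by
    simp only [hw, polyaProb, hden]
    rw [← Finset.sum_div, rfac_vandermonde c n x (1-x), hden]
    exact div_self (ne_of_gt hrf_pos)
  -- the denominator equals the tail factor
  obtain ⟨n', rfl⟩ : ∃ n', n = n' + 1 := ⟨n - 1, by omega⟩
  have htail : rfac 1 c (n'+1) = rfac (1+c) c n' := by
    rw [rfac_succ_left, one_mul]
  have key : ∑ k ∈ Finset.range (n'+1+1),
      (k:ℝ) * ((n'+1).choose k : ℝ) * rfac x c k * rfac (1-x) c (n'+1-k)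
      = ((n':ℝ)+1) * x * rfac (1+c) c n' := by
    rw [rfac_moment c n' x (1-x)]
    congr 2
    norm_num
  have hnn : ((n'+1 : ℕ):ℝ) = (n':ℝ) + 1 := by push_cast; ring
  have hw_mean : ∑ k ∈ Finset.range (n'+1+1), w k * ((k:ℝ)/((n'+1:ℕ):ℝ)) = x := by
    have step : ∀ k ∈ Finset.range (n'+1+1), w k * ((k:ℝ)/((n'+1:ℕ):ℝ))
        = ((k:ℝ) * ((n'+1).choose k : ℝ) * rfac x c k * rfac (1-x) c (n'+1-k))
          / (rfac (1+c) c n' * ((n':ℝ)+1)) := by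
      intro k hk
      rw [hw]
      simp only [polyaProb, hden, htail, hnn]
      rw [div_mul_div_comm]
      congr 1
      ring
    rw [Finset.sum_congr rfl step, ← Finset.sum_div, key]
    have hD' : 0 < rfac (1+c) c n' := htail ▸ hrf_pos
    field_simp
  -- Jensen
  have hmem : ∀ k ∈ Finset.range (n'+1+1), (k:ℝ)/((n'+1:ℕ):ℝ) ∈ Set.Icc (0:ℝ) 1 := by
    intro k hk
    have hk' : k ≤ n'+1 := Nat.lt_succ_iff.mp (Finset.mem_range.mp hk)
    constructor
    · positivity
    · rw [div_le_one (by positivity)]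
      exact_mod_cast hk'
  have hJ := hf.map_sum_le hw_nonneg hw_sum hmem
  rw [Rop]
  simp only [smul_eq_mul] at hJ
  rw [hw_mean] at hJ
  exact hJ
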